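/- Given λ_P·ℓ̄_P = 3λ'_E·γ̄_E + 2λ'_E with λ_P = λ'_V·ᾱ_V + λ'_Z·ρ̄_Z > 0, λ'_E = λ'_V·μ'_VE/2, λ'_Z = λ'_V(μ'_VE−2)/2 and λ'_E·ᾱ_E = λ'_V·ᾱ_V, the mean perimeter of the typical plate is ℓ̄_P = (3γ̄_E + 2)·μ'_VE / ((μ'_VE − 2)·ρ̄_Z + μ'_VE·ᾱ_E). -/

import Mathlib

theorem stmt13 (lamP ℓP lam'V lam'E lam'Z μVE γE ρZ αE αV : ℝ)
    (h1 : lamP * ℓP = 3 * lam'E * γE + 2 * lam'E)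
    (hlamP : lamP = lam'V * αV + lam'Z * ρZ) (hlamPpos : 0 < lamP)
    (hE : lam'E = lam'V * μVE / 2)
    (hZ : lam'Z = lam'V * (μVE - 2) / 2)
    (hid : lam'E * αE = lam'V * αV) :
    ℓP = (3 * γE + 2) * μVE / ((μVE - 2) * ρZ + μVE * αE) := by
  have hD : lamP = lam'V * ((μVE - 2) * ρZ + μVE * αE) / 2 := by
    rw [hlamP, ← hid, hE, hZ]; ring
  have hVne : lam'V ≠ 0 := by
    intro h; rw [h] at hD; simp at hD; linarith
  have hDne : (μVE - 2) * ρZ + μVE * αE ≠ 0 := by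
    intro h; rw [h] at hD; simp at hD; linarith
  rw [hD, hE] at h1
  field_simp
  field_simp at h1
  apply mul_left_cancel₀ hVne
  linear_combination lam'V * h1
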